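/- Let p₀ ∈ (1/3, 1) be the unique zero of g(p) = 4·ln(1 + p) − 3p in (0,1], and let p ∈ (p₀, 1). Define w_p(a) = (2/p)·∫₀ᵖ (a + t)/(1 + a t) dt − a on [0,1]. Then there exists a unique a_p ∈ (0,1) with w_p'(a_p) = 0, w_p is strictly increasing on [0, a_p], strictly decreasing on [a_p, 1], and w_p(a_p) > 1. -/

import Mathlib

open Set MeasureTheory intervalIntegral Metric

lemma denom_big {b₀ x t p : ℝ} (hb : b₀ ∈ Set.Icc (0:ℝ) 1) (hx : x ∈ Metric.ball b₀ (1/2))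
    (ht : t ∈ Set.Ioc (0:ℝ) p) (hp1 : p < 1) : 1/2 < 1 + x * t := by
  rcases hb with ⟨hb0, hb1⟩
  rw [Metric.mem_ball, Real.dist_eq, abs_lt] at hx
  nlinarith [mul_nonneg (by linarith : (0:ℝ) ≤ x + 1/2) ht.1.le, ht.2, ht.1]

lemma hasDeriv_I (p : ℝ) (hp0 : 0 < p) (hp1 : p < 1) {b₀ : ℝ} (hb : b₀ ∈ Set.Icc (0:ℝ) 1) :
    HasDerivAt (fun x : ℝ => ∫ t in (0:ℝ)..p, (x + t) / (1 + x * t))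
      (∫ t in (0:ℝ)..p, (1 - t^2) / (1 + b₀ * t)^2) b₀ := by
  have hIoc : Set.uIoc (0:ℝ) p = Set.Ioc 0 p := Set.uIoc_of_le hp0.le
  have key := intervalIntegral.hasDerivAt_integral_of_dominated_loc_of_deriv_le
    (F := fun x t => (x + t) / (1 + x * t)) (F' := fun x t => (1 - t^2) / (1 + x * t)^2)
    (x₀ := b₀) (a := 0) (b := p) (μ := volume) (bound := fun _ => 4) (s := Metric.ball b₀ (1/2))
    (Metric.ball_mem_nhds b₀ (by norm_num)) ?_ ?_ ?_ ?_ ?_ ?_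
  · exact key.2
  · -- measurability eventually
    filter_upwards [Metric.ball_mem_nhds b₀ (by norm_num : (0:ℝ) < 1/2)] with x hx
    apply ContinuousOn.aestronglyMeasurable _ measurableSet_uIoc
    rw [hIoc]
    apply ContinuousOn.div (by fun_prop) (by fun_prop)
    intro t ht
    have := denom_big hb hx ht hp1
    linarith
  · -- integrability at b₀
    apply ContinuousOn.intervalIntegrable
    rw [Set.uIcc_of_le hp0.le]
    apply ContinuousOn.div (by fun_prop) (by fun_prop)
    intro t ht
    have : 0 ≤ b₀ * t := mul_nonneg hb.1 ht.1
    nlinarith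
  · -- measurability of F' b₀
    apply ContinuousOn.aestronglyMeasurable _ measurableSet_uIoc
    rw [hIoc]
    apply ContinuousOn.div (by fun_prop) (by fun_prop)
    intro t ht
    have : 0 ≤ b₀ * t := mul_nonneg hb.1 ht.1.le
    positivity
  · -- bound
    refine Filter.Eventually.of_forall fun t ht x hx => ?_
    rw [hIoc] at ht
    have hd := denom_big hb hx ht hp1
    rw [Real.norm_eq_abs, abs_div, abs_of_pos (by positivity : (0:ℝ) < (1 + x*t)^2)]
    have h1 : |1 - t^2| ≤ 1 := by
      rw [abs_le]; constructor <;> nlinarith [ht.1, ht.2]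
    rw [div_le_iff₀ (by positivity)]
    show |1 - t^2| ≤ 4 * (1 + x*t)^2
    nlinarith [sq_nonneg (1 + x*t - 1/2)]
  · exact intervalIntegrable_const
  · -- differentiability
    refine Filter.Eventually.of_forall fun t ht x hx => ?_
    rw [hIoc] at ht
    have hd : 1 + x * t ≠ 0 := by have := denom_big hb hx ht hp1; linarith
    have H := ((hasDerivAt_id x).add_const t).div
      (((hasDerivAt_id x).mul_const t).const_add 1) hd
    refine H.congr_deriv ?_
    simp only [id]
    field_simp
    ring

lemma contOn_F' (p b : ℝ) (hb : b ∈ Set.Icc (0:ℝ) 1) :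
    ContinuousOn (fun t : ℝ => (1 - t^2) / (1 + b * t)^2) (Set.Icc 0 p) := by
  apply ContinuousOn.div (by fun_prop) (by fun_prop)
  intro t ht
  have : 0 ≤ b * t := mul_nonneg hb.1 ht.1
  positivity

lemma D_anti (p : ℝ) (hp0 : 0 < p) (hp1 : p < 1) {b₁ b₂ : ℝ}
    (h1 : b₁ ∈ Set.Icc (0:ℝ) 1) (h2 : b₂ ∈ Set.Icc (0:ℝ) 1) (hlt : b₁ < b₂) :
    (∫ t in (0:ℝ)..p, (1 - t^2) / (1 + b₂ * t)^2) <
      ∫ t in (0:ℝ)..p, (1 - t^2) / (1 + b₁ * t)^2 := by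
  have hi1 : IntervalIntegrable (fun t : ℝ => (1 - t^2) / (1 + b₁ * t)^2) volume 0 p := by
    apply ContinuousOn.intervalIntegrable; rw [Set.uIcc_of_le hp0.le]; exact contOn_F' p b₁ h1
  have hi2 : IntervalIntegrable (fun t : ℝ => (1 - t^2) / (1 + b₂ * t)^2) volume 0 p := by
    apply ContinuousOn.intervalIntegrable; rw [Set.uIcc_of_le hp0.le]; exact contOn_F' p b₂ h2
  rw [← sub_pos, ← intervalIntegral.integral_sub hi1 hi2]
  apply intervalIntegral.intervalIntegral_pos_of_pos_on (hi1.sub hi2) _ hp0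
  intro t ht
  have ht1 : 0 < t := ht.1
  have ht2 : t < 1 := lt_trans ht.2 hp1
  have hd1 : 0 < 1 + b₁ * t := by nlinarith [mul_nonneg h1.1 ht1.le]
  have hd2 : 0 < 1 + b₂ * t := by nlinarith [mul_nonneg h2.1 ht1.le]
  have hnum : 0 < 1 - t^2 := by nlinarith
  have hsq : (1 + b₁ * t)^2 < (1 + b₂ * t)^2 := by
    nlinarith [mul_pos (mul_pos (sub_pos.2 hlt) ht1) (add_pos hd1 hd2)]
  have := div_lt_div_of_pos_left hnum (by positivity : (0:ℝ) < (1 + b₁*t)^2) hsq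
  linarith

lemma D_zero (p : ℝ) (hp0 : 0 < p) :
    (∫ t in (0:ℝ)..p, (1 - t^2) / (1 + 0 * t)^2) = p - p^3/3 := by
  have heq : (fun t : ℝ => (1 - t^2) / (1 + 0 * t)^2) = fun t : ℝ => 1 - t^2 := by
    funext t; simp
  have key : ∀ t ∈ Set.uIcc (0:ℝ) p,
      HasDerivAt (fun s : ℝ => s - s^3/3) (1 - t^2) t := by
    intro t _
    have H := (hasDerivAt_id t).sub ((hasDerivAt_pow 3 t).div_const 3)
    refine H.congr_deriv ?_
    norm_num
  rw [heq, intervalIntegral.integral_eq_sub_of_hasDerivAt key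
    (by apply Continuous.intervalIntegrable; fun_prop)]
  ring

lemma D_one (p : ℝ) (hp0 : 0 < p) (hp1 : p < 1) :
    (∫ t in (0:ℝ)..p, (1 - t^2) / (1 + 1 * t)^2) = 2 * Real.log (1 + p) - p := by
  have key : ∀ t ∈ Set.uIcc (0:ℝ) p,
      HasDerivAt (fun s : ℝ => 2 * Real.log (1 + s) - s) ((1 - t^2) / (1 + 1 * t)^2) t := by
    intro t ht
    rw [Set.uIcc_of_le hp0.le] at ht
    have hpos : (0:ℝ) < 1 + t := by linarith [ht.1]
    have H := ((((hasDerivAt_id t).const_add 1).log hpos.ne').const_mul 2).sub (hasDerivAt_id t)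
    refine H.congr_deriv ?_
    simp only [id]
    field_simp
    ring
  have hint : IntervalIntegrable (fun t : ℝ => (1 - t^2) / (1 + 1 * t)^2) volume 0 p := by
    apply ContinuousOn.intervalIntegrable
    rw [Set.uIcc_of_le hp0.le]
    exact contOn_F' p 1 (by norm_num)
  rw [intervalIntegral.integral_eq_sub_of_hasDerivAt key hint]
  simp

theorem stmt_19 (p₀ : ℝ) (hp₀ : p₀ ∈ Set.Ioo (1 / 3 : ℝ) 1)
    (hg : 4 * Real.log (1 + p₀) - 3 * p₀ = 0)
    (huniq : ∀ q ∈ Set.Ioc (0 : ℝ) 1, 4 * Real.log (1 + q) - 3 * q = 0 → q = p₀)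
    (p : ℝ) (hp1 : p₀ < p) (hp2 : p < 1) :
    ∃ ap ∈ Set.Ioo (0 : ℝ) 1,
      deriv (fun b : ℝ => (2 / p * ∫ t in (0 : ℝ)..p, (b + t) / (1 + b * t)) - b) ap = 0 ∧
      (∀ b ∈ Set.Ioo (0 : ℝ) 1,
        deriv (fun c : ℝ => (2 / p * ∫ t in (0 : ℝ)..p, (c + t) / (1 + c * t)) - c) b = 0 →
          b = ap) ∧
      StrictMonoOn (fun b : ℝ => (2 / p * ∫ t in (0 : ℝ)..p, (b + t) / (1 + b * t)) - b)
        (Set.Icc 0 ap) ∧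
      StrictAntiOn (fun b : ℝ => (2 / p * ∫ t in (0 : ℝ)..p, (b + t) / (1 + b * t)) - b)
        (Set.Icc ap 1) ∧
      1 < (2 / p * ∫ t in (0 : ℝ)..p, (ap + t) / (1 + ap * t)) - ap := by
  obtain ⟨hp₀l, hp₀r⟩ := hp₀
  have hp0 : 0 < p := by linarith
  set w : ℝ → ℝ := fun b => (2 / p * ∫ t in (0:ℝ)..p, (b + t) / (1 + b * t)) - b with hw
  set D : ℝ → ℝ := fun b => ∫ t in (0:ℝ)..p, (1 - t^2) / (1 + b * t)^2 with hD
  set f' : ℝ → ℝ := fun b => 2 / p * D b - 1 with hf'def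
  have hderiv : ∀ b ∈ Set.Icc (0:ℝ) 1, HasDerivAt w (f' b) b := fun b hb =>
    ((hasDeriv_I p hp0 hp2 hb).const_mul (2/p)).sub (hasDerivAt_id b)
  -- g p < 0
  have hlog : 4 * Real.log (1 + p) - 3 * p < 0 := by
    have hanti : StrictAntiOn (fun q => 4 * Real.log (1 + q) - 3 * q) (Set.Icc p₀ p) := by
      apply strictAntiOn_of_deriv_neg (convex_Icc _ _)
      · apply ContinuousOn.sub
        · apply ContinuousOn.mul continuousOn_const
          apply ContinuousOn.log (by fun_prop)
          intro q hq
          have : (0:ℝ) < 1 + q := by have := hq.1; linarith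
          exact this.ne'
        · fun_prop
      · intro q hq
        rw [interior_Icc] at hq
        have hq0 : (0:ℝ) < 1 + q := by have := hq.1; linarith
        have H : HasDerivAt (fun q : ℝ => 4 * Real.log (1 + q) - 3 * q)
            (4 * (1 / (1 + q)) - 3 * 1) q :=
          ((((hasDerivAt_id q).const_add 1).log hq0.ne').const_mul 4).sub
            ((hasDerivAt_id q).const_mul 3)
        rw [H.deriv]
        have hq3 : (1:ℝ)/3 < q := by have := hq.1; linarith
        have : 4 * (1 / (1 + q)) < 3 := by
          rw [mul_one_div, div_lt_iff₀ hq0]; nlinarith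
        linarith
    have h2 : 4 * Real.log (1 + p) - 3 * p < 4 * Real.log (1 + p₀) - 3 * p₀ :=
      hanti (left_mem_Icc.2 hp1.le) (right_mem_Icc.2 hp1.le) hp1
    linarith
  have hf'0 : 0 < f' 0 := by
    have h0 : D 0 = p - p^3/3 := D_zero p hp0
    have heq : f' 0 = 2/p * (p - p^3/3) - 1 := by rw [show f' 0 = 2/p * D 0 - 1 from rfl, h0]
    have heq2 : 2/p * (p - p^3/3) - 1 = 1 - 2*p^2/3 := by field_simp; ring
    rw [heq, heq2]; nlinarith
  have hf'1 : f' 1 < 0 := by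
    have h1 : D 1 = 2 * Real.log (1 + p) - p := D_one p hp0 hp2
    have heq : f' 1 = (4 * Real.log (1 + p) - 3 * p) / p := by
      rw [show f' 1 = 2/p * D 1 - 1 from rfl, h1]; field_simp; ring
    rw [heq]
    exact div_neg_of_neg_of_pos (by linarith) hp0
  obtain ⟨ap, hap, hapf⟩ := exists_hasDerivWithinAt_eq_of_lt_of_gt (by norm_num : (0:ℝ) ≤ 1)
    (fun x hx => (hderiv x hx).hasDerivWithinAt) hf'0 hf'1
  have hapIcc : ap ∈ Set.Icc (0:ℝ) 1 := ⟨hap.1.le, hap.2.le⟩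
  have hderiv_eq : ∀ b ∈ Set.Icc (0:ℝ) 1, deriv w b = f' b := fun b hb => (hderiv b hb).deriv
  have hDanti : ∀ b₁ ∈ Set.Icc (0:ℝ) 1, ∀ b₂ ∈ Set.Icc (0:ℝ) 1, b₁ < b₂ → D b₂ < D b₁ :=
    fun b₁ h1 b₂ h2 hlt => D_anti p hp0 hp2 h1 h2 hlt
  have hfpos : ∀ x ∈ Set.Ioo (0:ℝ) ap, 0 < f' x := by
    intro x hx
    have hxIcc : x ∈ Set.Icc (0:ℝ) 1 := ⟨hx.1.le, le_trans hx.2.le hap.2.le⟩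
    have hDx := hDanti x hxIcc ap hapIcc hx.2
    have h2p : (0:ℝ) < 2/p := by positivity
    have hfap : 2/p * D ap - 1 = 0 := hapf
    show 0 < 2/p * D x - 1
    nlinarith [mul_lt_mul_of_pos_left hDx h2p]
  have hfneg : ∀ x ∈ Set.Ioo ap (1:ℝ), f' x < 0 := by
    intro x hx
    have hxIcc : x ∈ Set.Icc (0:ℝ) 1 := ⟨le_trans hap.1.le hx.1.le, hx.2.le⟩
    have hDx := hDanti ap hapIcc x hxIcc hx.1
    have h2p : (0:ℝ) < 2/p := by positivity
    have hfap : 2/p * D ap - 1 = 0 := hapf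
    show 2/p * D x - 1 < 0
    nlinarith [mul_lt_mul_of_pos_left hDx h2p]
  have hmono : StrictMonoOn w (Set.Icc 0 ap) := by
    apply strictMonoOn_of_deriv_pos (convex_Icc _ _)
    · intro x hx
      exact (hderiv x ⟨hx.1, le_trans hx.2 hap.2.le⟩).continuousAt.continuousWithinAt
    · intro x hx
      rw [interior_Icc] at hx
      rw [hderiv_eq x ⟨hx.1.le, le_trans hx.2.le hap.2.le⟩]
      exact hfpos x hx
  have hanti : StrictAntiOn w (Set.Icc ap 1) := by
    apply strictAntiOn_of_deriv_neg (convex_Icc _ _)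
    · intro x hx
      exact (hderiv x ⟨le_trans hap.1.le hx.1, hx.2⟩).continuousAt.continuousWithinAt
    · intro x hx
      rw [interior_Icc] at hx
      rw [hderiv_eq x ⟨le_trans hap.1.le hx.1.le, hx.2.le⟩]
      exact hfneg x hx
  have hw1 : w 1 = 1 := by
    have hint : (∫ t in (0:ℝ)..p, (1 + t) / (1 + 1 * t)) = p := by
      rw [intervalIntegral.integral_congr (g := fun _ : ℝ => (1:ℝ)) ?_]
      · simp
      · intro t ht
        rw [Set.uIcc_of_le hp0.le] at ht
        have h1t : (0:ℝ) < 1 + t := by linarith [ht.1]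
        show (1 + t) / (1 + 1 * t) = 1
        rw [one_mul]
        exact div_self h1t.ne'
    show (2 / p * ∫ t in (0:ℝ)..p, ((1:ℝ) + t) / (1 + 1 * t)) - 1 = 1
    rw [hint]
    field_simp
    norm_num
  refine ⟨ap, hap, ?_, ?_, hmono, hanti, ?_⟩
  · rw [hderiv_eq ap hapIcc, hapf]
  · intro b hb hb0
    have hbIcc : b ∈ Set.Icc (0:ℝ) 1 := ⟨hb.1.le, hb.2.le⟩
    have hfb : f' b = 0 := by rw [← hderiv_eq b hbIcc]; exact hb0
    have hDb : D b = D ap := by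
      have e1 : 2/p * D b - 1 = 0 := hfb
      have e2 : 2/p * D ap - 1 = 0 := hapf
      have h2p : (0:ℝ) < 2/p := by positivity
      nlinarith
    rcases lt_trichotomy b ap with h | h | h
    · exact absurd hDb (ne_of_gt (hDanti b hbIcc ap hapIcc h))
    · exact h
    · exact absurd hDb (ne_of_lt (hDanti ap hapIcc b hbIcc h))
  · have := hanti ⟨le_refl ap, hap.2.le⟩ ⟨hap.2.le, le_refl 1⟩ hap.2
    rw [hw1] at this
    exact this
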